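/- Let R be a nontrivial commutative ring that is an integral domain, σ a type, and S : Fin n → Finset σ a family of edge sets such that for all k ≠ k', S k' is not a subset of S k; put P_k = ∏_{e ∈ S k} X_e. Then the polynomial f = ∏_{T ≠ T'} (Σ_{k ∈ T} P_k − Σ_{k ∈ T'} P_k), where the product ranges over all ordered pairs of distinct subsets T, T' of Fin n, is not the zero polynomial in the multivariate polynomial ring over R with variables indexed by σ. -/

import Mathlib

open MvPolynomial

private lemma prod_X_eq_monomial {R : Type*} [CommRing R] {σ : Type*} (s : Finset σ) :
    (∏ e ∈ s, (X e : MvPolynomial σ R)) =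
      monomial (∑ e ∈ s, Finsupp.single e 1) 1 := by
  classical
  induction s using Finset.induction with
  | empty => simp
  | insert a s h ih =>
      rw [Finset.prod_insert h, Finset.sum_insert h, ih, X, monomial_mul, one_mul]

private lemma sum_single_inj {σ : Type*} {s t : Finset σ}
    (h : (∑ e ∈ s, Finsupp.single e 1) = (∑ e ∈ t, Finsupp.single e (1 : ℕ))) :
    s = t := by
  classical
  ext a
  have := DFunLike.congr_fun h a
  simp only [Finset.sum_apply', Finsupp.single_apply] at this
  rw [Finset.sum_ite_eq' s a (fun _ => 1), Finset.sum_ite_eq' t a (fun _ => 1)] at this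
  by_cases ha : a ∈ s <;> by_cases hb : a ∈ t <;> simp_all

/-- The "grand" identifiability polynomial — the product over all ordered pairs
of distinct subsets `T, T'` of paths of the differences of the corresponding
probe polynomials — is not identically zero, provided the paths' edge sets form
an antichain under inclusion. -/
theorem grand_identifiability_polynomial_ne_zero
    (R : Type*) [CommRing R] [IsDomain R] (σ : Type*) (n : ℕ)
    (S : Fin n → Finset σ)
    (hS : ∀ k k' : Fin n, k ≠ k' → ¬ S k' ⊆ S k) :
    (∏ TT' ∈ (Finset.univ : Finset (Finset (Fin n) × Finset (Fin n))).filter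
        (fun p => p.1 ≠ p.2),
      ((∑ k ∈ TT'.1, ∏ e ∈ S k, (MvPolynomial.X e : MvPolynomial σ R)) -
        ∑ k ∈ TT'.2, ∏ e ∈ S k, (MvPolynomial.X e : MvPolynomial σ R))) ≠ 0 := by
  classical
  rw [Finset.prod_ne_zero_iff]
  intro p hp
  rw [Finset.mem_filter] at hp
  obtain ⟨-, hne⟩ := hp
  -- pick a witness in the symmetric difference
  have : ∃ k0, ¬ (k0 ∈ p.1 ↔ k0 ∈ p.2) := by
    by_contra h
    push_neg at h
    exact hne (Finset.ext fun a => by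
      have := h a; tauto)
  obtain ⟨k0, hk0⟩ := this
  set d0 : σ →₀ ℕ := ∑ e ∈ S k0, Finsupp.single e 1 with hd0
  -- coefficient of d0 in each probe sum
  have key : ∀ T : Finset (Fin n),
      MvPolynomial.coeff d0 (∑ k ∈ T, ∏ e ∈ S k, (X e : MvPolynomial σ R)) =
        if k0 ∈ T then 1 else 0 := by
    intro T
    rw [MvPolynomial.coeff_sum]
    have : ∀ k ∈ T, MvPolynomial.coeff d0 (∏ e ∈ S k, (X e : MvPolynomial σ R)) =
        if k = k0 then 1 else 0 := by
      intro k _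
      rw [prod_X_eq_monomial, MvPolynomial.coeff_monomial]
      by_cases hk : k = k0
      · subst hk; simp [hd0]
      · have hSne : S k ≠ S k0 := fun h => hS k k0 hk (h ▸ subset_rfl)
        have : (∑ e ∈ S k, Finsupp.single e 1) ≠ d0 := by
          intro h; exact hSne (sum_single_inj (h.trans hd0))
        simp [this, hk]
    rw [Finset.sum_congr rfl this, Finset.sum_ite_eq' T k0 (fun _ => (1 : R))]
  intro h0
  have := congrArg (MvPolynomial.coeff d0) h0
  rw [MvPolynomial.coeff_sub, key p.1, key p.2, MvPolynomial.coeff_zero] at this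
  by_cases h1 : k0 ∈ p.1 <;> by_cases h2 : k0 ∈ p.2 <;> simp_all
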